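/- For every real w > 0, 0 < √(2π) · (1 + w²) · e^{w²/2} · (1 − Φ(w)) − w ≤ 3/(1 + w)³, where Φ is the standard normal cumulative distribution function. -/

import Mathlib

noncomputable section

/-- The standard normal cumulative distribution function
`Φ(w) = ∫_{-∞}^w (1/√(2π)) e^{-t²/2} dt`. -/
def Phi (w : ℝ) : ℝ :=
  ∫ t in Set.Iic w, (1 / Real.sqrt (2 * Real.pi)) * Real.exp (-t ^ 2 / 2)

namespace MillsAux

open Real MeasureTheory Set Filter Topology

/-- The (unnormalized) Gaussian density. -/
def gs (t : ℝ) : ℝ := Real.exp (-t ^ 2 / 2)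

lemma gs_pos (t : ℝ) : 0 < gs t := Real.exp_pos _

lemma gs_eq : gs = fun t => Real.exp (-(1/2) * t ^ 2) := by
  funext t; unfold gs; ring_nf

lemma integrable_gs : Integrable gs := by
  rw [gs_eq]; exact integrable_exp_neg_mul_sq (by norm_num)

lemma integral_gs : ∫ t, gs t = Real.sqrt (2 * π) := by
  rw [gs_eq, integral_gaussian, show (π / (1/2) : ℝ) = 2 * π by ring]

lemma hasDerivAt_gs (t : ℝ) : HasDerivAt gs (-t * gs t) t := by
  have h : HasDerivAt (fun t : ℝ => -t ^ 2 / 2) (-t) t := by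
    have := ((hasDerivAt_pow 2 t).neg.div_const 2)
    exact this.congr_deriv (by norm_num; ring)
  have := h.exp
  unfold gs
  simpa [mul_comm] using this

lemma gs_tendsto : Tendsto gs atTop (𝓝 0) := by
  have h1 : Tendsto (fun t : ℝ => t ^ 2 / 2) atTop atTop :=
    (tendsto_pow_atTop two_ne_zero).atTop_div_const (by norm_num)
  have := Real.tendsto_exp_neg_atTop_nhds_zero.comp h1
  refine this.congr fun t => ?_
  simp [Function.comp, gs, neg_div]

/-- Antiderivative rational part for the upper bound. -/
def uu (t : ℝ) : ℝ := t / (1 + t ^ 2) + 3 / ((1 + t) ^ 3 * (1 + t ^ 2))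

def UU' (t : ℝ) : ℝ :=
  (1 * (1 + t ^ 2) - t * (2 * t)) / (1 + t ^ 2) ^ 2 +
  (0 * ((1 + t) ^ 3 * (1 + t ^ 2)) - 3 * (3 * (1 + t) ^ 2 * (1 + t ^ 2) + (1 + t) ^ 3 * (2 * t)))
    / ((1 + t) ^ 3 * (1 + t ^ 2)) ^ 2

/-- Antiderivative rational part for the lower bound. -/
def vv (t : ℝ) : ℝ := t / (1 + t ^ 2)

def VV' (t : ℝ) : ℝ := (1 * (1 + t ^ 2) - t * (2 * t)) / (1 + t ^ 2) ^ 2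

lemma one_add_sq_ne (t : ℝ) : (1 + t ^ 2) ≠ 0 := by positivity

lemma hasDerivAt_vv (t : ℝ) : HasDerivAt vv (VV' t) t := by
  have h1 : HasDerivAt (fun t : ℝ => 1 + t ^ 2) (2 * t) t := by
    simpa using (hasDerivAt_pow 2 t).const_add 1
  exact (hasDerivAt_id t).div h1 (one_add_sq_ne t)

lemma hasDerivAt_uu {t : ℝ} (ht : 0 < t) : HasDerivAt uu (UU' t) t := by
  have h1 : HasDerivAt (fun t : ℝ => 1 + t ^ 2) (2 * t) t := by
    simpa using (hasDerivAt_pow 2 t).const_add 1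
  have h2 : HasDerivAt (fun t : ℝ => (1 + t) ^ 3) (3 * (1 + t) ^ 2) t := by
    have h0 : HasDerivAt (fun t : ℝ => 1 + t) 1 t := by
      simpa using (hasDerivAt_id t).const_add 1
    have := (h0.pow 3)
    exact this.congr_deriv (by norm_num)
  have h3 : HasDerivAt (fun t : ℝ => (1 + t) ^ 3 * (1 + t ^ 2))
      (3 * (1 + t) ^ 2 * (1 + t ^ 2) + (1 + t) ^ 3 * (2 * t)) t := h2.mul h1
  have hne : ((1 + t) ^ 3 * (1 + t ^ 2)) ≠ 0 := by positivity
  exact (hasDerivAt_vv t).add ((hasDerivAt_const t 3).div h3 hne)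

lemma vv_ident (t : ℝ) : t * vv t - VV' t = 1 - 2 / (1 + t ^ 2) ^ 2 := by
  unfold vv VV'
  have := one_add_sq_ne t
  field_simp
  ring

lemma poly_nonneg {t : ℝ} (ht : 0 ≤ t) : 0 ≤ t ^ 4 - 5 * t ^ 3 + 6 * t ^ 2 + t + 7 := by
  nlinarith [sq_nonneg (t ^ 2 - 5 * t / 2 - 1 / 8), ht]

lemma uu_ident {t : ℝ} (ht : 0 < t) :
    t * uu t - UU' t
      = 1 + (t ^ 4 - 5 * t ^ 3 + 6 * t ^ 2 + t + 7) / ((1 + t) ^ 4 * (1 + t ^ 2) ^ 2) := by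
  unfold uu UU'
  have h1 := one_add_sq_ne t
  have h2 : (1 + t) ≠ 0 := by positivity
  field_simp
  ring

lemma uu_key {t : ℝ} (ht : 0 < t) : 1 ≤ t * uu t - UU' t := by
  rw [uu_ident ht]
  have h : 0 ≤ (t ^ 4 - 5 * t ^ 3 + 6 * t ^ 2 + t + 7) / ((1 + t) ^ 4 * (1 + t ^ 2) ^ 2) :=
    div_nonneg (poly_nonneg ht.le) (by positivity)
  linarith

lemma vv_bounds {t : ℝ} (ht : 0 ≤ t) : 0 ≤ vv t ∧ vv t ≤ 1 := by
  unfold vv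
  constructor
  · positivity
  · rw [div_le_one (by positivity)]; nlinarith

lemma uu_bounds {t : ℝ} (ht : 0 ≤ t) : 0 ≤ uu t ∧ uu t ≤ 4 := by
  obtain ⟨h1, h2⟩ := vv_bounds ht
  have hd : (1:ℝ) ≤ (1 + t) ^ 3 * (1 + t ^ 2) := by
    nlinarith [pow_nonneg ht 2, pow_nonneg ht 3, pow_nonneg ht 4, pow_nonneg ht 5,
      mul_nonneg (pow_nonneg ht 3) (pow_nonneg ht 2)]
  have h3 : (0:ℝ) ≤ 3 / ((1 + t) ^ 3 * (1 + t ^ 2)) := by positivity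
  have h4 : 3 / ((1 + t) ^ 3 * (1 + t ^ 2)) ≤ 3 := by
    rw [div_le_iff₀ (by nlinarith)]; nlinarith
  unfold uu vv at *
  constructor <;> linarith

lemma tendsto_uu_gs : Tendsto (fun t => -(uu t * gs t)) atTop (𝓝 0) := by
  rw [show (0:ℝ) = -0 by norm_num]
  apply Tendsto.neg
  refine squeeze_zero' (g := fun t => 4 * gs t) ?_ ?_ ?_
  · filter_upwards [eventually_ge_atTop (0:ℝ)] with t ht
    exact mul_nonneg (uu_bounds ht).1 (gs_pos t).le
  · filter_upwards [eventually_ge_atTop (0:ℝ)] with t ht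
    exact mul_le_mul_of_nonneg_right (uu_bounds ht).2 (gs_pos t).le
  · simpa using gs_tendsto.const_mul 4

lemma tendsto_vv_gs : Tendsto (fun t => -(vv t * gs t)) atTop (𝓝 0) := by
  rw [show (0:ℝ) = -0 by norm_num]
  apply Tendsto.neg
  refine squeeze_zero' (g := fun t => 1 * gs t) ?_ ?_ ?_
  · filter_upwards [eventually_ge_atTop (0:ℝ)] with t ht
    exact mul_nonneg (vv_bounds ht).1 (gs_pos t).le
  · filter_upwards [eventually_ge_atTop (0:ℝ)] with t ht
    exact mul_le_mul_of_nonneg_right (vv_bounds ht).2 (gs_pos t).le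
  · simpa using gs_tendsto.const_mul 1

lemma E_le {w : ℝ} (hw : 0 < w) : ∫ t in Ioi w, gs t ≤ uu w * gs w := by
  set F' : ℝ → ℝ := fun t => (t * uu t - UU' t) * gs t with hF'
  have hderiv : ∀ t ∈ Ici w, HasDerivAt (fun t => -(uu t * gs t)) (F' t) t := by
    intro t ht
    have h := ((hasDerivAt_uu (lt_of_lt_of_le hw ht)).mul (hasDerivAt_gs t)).neg
    refine h.congr_deriv ?_
    simp only [hF']
    ring
  have hge : ∀ t ∈ Ioi w, gs t ≤ F' t := by
    intro t ht
    have h1 := uu_key (hw.trans ht)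
    have h2 := gs_pos t
    simp only [hF']
    nlinarith
  have hnonneg : ∀ t ∈ Ioi w, 0 ≤ F' t := fun t ht => (gs_pos t).le.trans (hge t ht)
  have hEq : ∫ t in Ioi w, F' t = 0 - (-(uu w * gs w)) :=
    integral_Ioi_of_hasDerivAt_of_nonneg' hderiv hnonneg tendsto_uu_gs
  have hIntOn : IntegrableOn F' (Ioi w) :=
    integrableOn_Ioi_deriv_of_nonneg' hderiv hnonneg tendsto_uu_gs
  calc ∫ t in Ioi w, gs t ≤ ∫ t in Ioi w, F' t :=
        setIntegral_mono_on integrable_gs.integrableOn hIntOn measurableSet_Ioi hge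
    _ = uu w * gs w := by rw [hEq]; ring

lemma continuous_A' : Continuous (fun t : ℝ => (t * vv t - VV' t) * gs t) := by
  have h1 : Continuous fun t : ℝ => 1 + t ^ 2 := by continuity
  have hvv : Continuous vv := continuous_id.div h1 one_add_sq_ne
  have hVV' : Continuous VV' := by
    apply Continuous.div (by continuity) (by continuity)
    intro t
    positivity
  have hgs : Continuous gs := Real.continuous_exp.comp (by continuity)
  exact ((continuous_id.mul hvv).sub hVV').mul hgs

lemma lt_E {w : ℝ} (hw : 0 < w) : vv w * gs w < ∫ t in Ioi w, gs t := by
  set A' : ℝ → ℝ := fun t => (t * vv t - VV' t) * gs t with hA'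
  have hderiv : ∀ t ∈ Ici w, HasDerivAt (fun t => -(vv t * gs t)) (A' t) t := by
    intro t _
    have h := ((hasDerivAt_vv t).mul (hasDerivAt_gs t)).neg
    refine h.congr_deriv ?_
    simp only [hA']
    ring
  have habs : ∀ t : ℝ, ‖A' t‖ ≤ gs t := by
    intro t
    have h1 : (0:ℝ) < 2 / (1 + t ^ 2) ^ 2 := by positivity
    have h2 : 2 / (1 + t ^ 2) ^ 2 ≤ 2 := by
      rw [div_le_iff₀ (by positivity)]
      nlinarith [sq_nonneg t, sq_nonneg (t^2)]
    have h3 : |t * vv t - VV' t| ≤ 1 := by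
      rw [vv_ident t, abs_le]
      constructor <;> nlinarith
    have h4 := gs_pos t
    simp only [hA', norm_mul, Real.norm_eq_abs, abs_of_pos h4]
    calc |t * vv t - VV' t| * gs t ≤ 1 * gs t :=
          mul_le_mul_of_nonneg_right h3 h4.le
      _ = gs t := one_mul _
  have hIntA' : IntegrableOn A' (Ioi w) := by
    refine Integrable.mono' integrable_gs.integrableOn
      continuous_A'.aestronglyMeasurable.restrict ?_
    exact ae_of_all _ habs
  have hEq : ∫ t in Ioi w, A' t = 0 - (-(vv w * gs w)) :=
    integral_Ioi_of_hasDerivAt_of_tendsto' hderiv hIntA' tendsto_vv_gs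
  have hdiffpos : ∀ t : ℝ, 0 < gs t - A' t := by
    intro t
    have h4 := gs_pos t
    have h5 : t * vv t - VV' t = 1 - 2 / (1 + t ^ 2) ^ 2 := vv_ident t
    have h6 : (0:ℝ) < 2 / (1 + t ^ 2) ^ 2 := by positivity
    simp only [hA']
    nlinarith
  have hIntDiff : IntegrableOn (fun t => gs t - A' t) (Ioi w) :=
    integrable_gs.integrableOn.sub hIntA'
  have hpos : 0 < ∫ t in Ioi w, (gs t - A' t) := by
    rw [setIntegral_pos_iff_support_of_nonneg_ae
      (ae_of_all _ fun t => (hdiffpos t).le) hIntDiff]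
    have hsub' : Ioi w ⊆ Function.support (fun t => gs t - A' t) ∩ Ioi w :=
      fun t ht => ⟨(hdiffpos t).ne', ht⟩
    refine lt_of_lt_of_le ?_ (measure_mono hsub')
    rw [Real.volume_Ioi]
    simp
  have hsub : ∫ t in Ioi w, (gs t - A' t)
      = (∫ t in Ioi w, gs t) - ∫ t in Ioi w, A' t :=
    integral_sub integrable_gs.integrableOn hIntA'
  rw [hsub, hEq] at hpos
  linarith

end MillsAux

open MillsAux Real MeasureTheory Set in
/-- For every `w > 0`, `0 < √(2π)(1 + w²) e^{w²/2}(1 - Φ(w)) - w ≤ 3/(1 + w)³`. -/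
theorem mills_type_bound_two (w : ℝ) (hw : 0 < w) :
    0 < Real.sqrt (2 * Real.pi) * (1 + w ^ 2) * Real.exp (w ^ 2 / 2) * (1 - Phi w) - w ∧
    Real.sqrt (2 * Real.pi) * (1 + w ^ 2) * Real.exp (w ^ 2 / 2) * (1 - Phi w) - w ≤
      3 / (1 + w) ^ 3 := by
  have hsqrtpos : 0 < Real.sqrt (2 * π) := Real.sqrt_pos.mpr (by positivity)
  set E := ∫ t in Ioi w, gs t with hE
  have hsplit : (∫ t in Iic w, gs t) + E = Real.sqrt (2 * π) := by
    rw [hE, intervalIntegral.integral_Iic_add_Ioi integrable_gs.integrableOn integrable_gs.integrableOn,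
      integral_gs]
  have hPhiw : Phi w = (1 / Real.sqrt (2 * π)) * ∫ t in Iic w, gs t := by
    unfold Phi gs
    rw [← integral_const_mul]
  have hPhi : Real.sqrt (2 * π) * (1 - Phi w) = E := by
    rw [hPhiw]
    rw [mul_sub, mul_one, ← mul_assoc, mul_one_div, div_self hsqrtpos.ne', one_mul]
    linarith
  have hrw : Real.sqrt (2 * π) * (1 + w ^ 2) * Real.exp (w ^ 2 / 2) * (1 - Phi w)
      = (1 + w ^ 2) * Real.exp (w ^ 2 / 2) * E := by
    rw [← hPhi]; ring
  have hexp : Real.exp (w ^ 2 / 2) * gs w = 1 := by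
    unfold gs
    rw [← Real.exp_add, show w ^ 2 / 2 + -w ^ 2 / 2 = 0 by ring, Real.exp_zero]
  have hne1 : (1 + w ^ 2) ≠ 0 := one_add_sq_ne w
  have hne2 : (1 + w) ≠ 0 := by positivity
  have hcpos : 0 < (1 + w ^ 2) * Real.exp (w ^ 2 / 2) := by positivity
  have h1 : (1 + w ^ 2) * Real.exp (w ^ 2 / 2) * (vv w * gs w) = w := by
    unfold vv
    calc (1 + w ^ 2) * Real.exp (w ^ 2 / 2) * (w / (1 + w ^ 2) * gs w)
        = w * (Real.exp (w ^ 2 / 2) * gs w) := by field_simp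
      _ = w := by rw [hexp]; ring
  have h2 : (1 + w ^ 2) * Real.exp (w ^ 2 / 2) * (uu w * gs w) = w + 3 / (1 + w) ^ 3 := by
    have huu : (1 + w ^ 2) * uu w = w + 3 / (1 + w) ^ 3 := by
      unfold uu
      field_simp
    calc (1 + w ^ 2) * Real.exp (w ^ 2 / 2) * (uu w * gs w)
        = ((1 + w ^ 2) * uu w) * (Real.exp (w ^ 2 / 2) * gs w) := by ring
      _ = (w + 3 / (1 + w) ^ 3) * 1 := by rw [huu, hexp]
      _ = w + 3 / (1 + w) ^ 3 := by ring
  have hlow := mul_lt_mul_of_pos_left (lt_E hw) hcpos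
  have hup := mul_le_mul_of_nonneg_left (E_le hw) hcpos.le
  rw [h1] at hlow
  rw [h2] at hup
  constructor
  · rw [hrw]; linarith
  · rw [hrw]; linarith
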